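/- If Φ_1, Φ_2 are quantum channels covariant with respect to unitary representations U_g (on H) and V_g (on K) of a group G, i.e., Φ_i ∘ Ad_{U_g} = Ad_{V_g} ∘ Φ_i, and the representation g ↦ U_g is irreducible, then for any λ ∈ (0,1) the partial trace Tr_K|λC(Φ_1) − (1−λ)C(Φ_2)| is proportional to the identity on H. -/

import Mathlib

open scoped ComplexOrder Matrix Kronecker
open Polynomial

variable {H K : Type*} [Fintype H] [DecidableEq H] [Fintype K] [DecidableEq K]

/-- Partial trace over the first factor `K` of `K × H`. -/
noncomputable def ptK (M : Matrix (K × H) (K × H) ℂ) : Matrix H H ℂ :=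
  Matrix.of fun i j => ∑ k : K, M (k, i) (k, j)

/-- The operator absolute value `|A| = √(AᴴA)`. -/
noncomputable def matAbs {d : Type*} [Fintype d] [DecidableEq d]
    (A : Matrix d d ℂ) : Matrix d d ℂ :=
  ((Matrix.posSemidef_conjTranspose_mul_self A).1.eigenvectorUnitary : Matrix d d ℂ) *
    Matrix.diagonal ((↑) ∘ Real.sqrt ∘ (Matrix.posSemidef_conjTranspose_mul_self A).1.eigenvalues) *
    (star (Matrix.posSemidef_conjTranspose_mul_self A).1.eigenvectorUnitary : Matrix d d ℂ)

/-- The Choi matrix of a linear map on matrices. -/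
noncomputable def choi (Φ : Matrix H H ℂ →ₗ[ℂ] Matrix K K ℂ) :
    Matrix (K × H) (K × H) ℂ :=
  Matrix.of fun p q => Φ (Matrix.single p.2 q.2 1) p.1 q.1

section aux

set_option linter.unusedSectionVars false

variable {d : Type*} [Fintype d] [DecidableEq d]

lemma aeval_comm' (p : ℂ[X]) {A B : Matrix d d ℂ} (h : Commute A B) :
    Commute A (Polynomial.aeval B p) := by
  induction p using Polynomial.induction_on' with
  | add p q hp hq => rw [map_add]; exact hp.add_right hq
  | monomial n a =>
      rw [Polynomial.aeval_monomial]
      exact (Algebra.commute_algebraMap_right a A).mul_right (h.pow_right n)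

lemma conj_pow' (W D : Matrix d d ℂ) (h1 : W * Wᴴ = 1) (h2 : Wᴴ * W = 1) :
    ∀ n : ℕ, (W * D * Wᴴ) ^ n = W * D ^ n * Wᴴ
  | 0 => by simp [h1]
  | n + 1 => by
      rw [pow_succ, conj_pow' W D h1 h2 n, pow_succ]
      calc W * D ^ n * Wᴴ * (W * D * Wᴴ) = W * D ^ n * (Wᴴ * W) * D * Wᴴ := by
            simp only [Matrix.mul_assoc]
        _ = W * (D ^ n * D) * Wᴴ := by rw [h2]; simp only [Matrix.mul_assoc, Matrix.mul_one]
        _ = _ := by simp only [Matrix.mul_assoc]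

lemma aeval_conj' (p : ℂ[X]) (W D : Matrix d d ℂ) (h1 : W * Wᴴ = 1) (h2 : Wᴴ * W = 1) :
    Polynomial.aeval (W * D * Wᴴ) p = W * Polynomial.aeval D p * Wᴴ := by
  induction p using Polynomial.induction_on' with
  | add p q hp hq => rw [map_add, map_add, hp, hq, Matrix.mul_add, Matrix.add_mul]
  | monomial n a =>
      rw [Polynomial.aeval_monomial, Polynomial.aeval_monomial, conj_pow' W D h1 h2,
        Algebra.algebraMap_eq_smul_one]
      rw [smul_mul_assoc, smul_mul_assoc, Matrix.one_mul, Matrix.one_mul,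
        Matrix.mul_smul, Matrix.smul_mul]

lemma aeval_diag' (p : ℂ[X]) (f : d → ℂ) :
    Polynomial.aeval (Matrix.diagonal f) p = Matrix.diagonal (fun i => p.eval (f i)) := by
  induction p using Polynomial.induction_on' with
  | add p q hp hq => rw [map_add, hp, hq, Matrix.diagonal_add]; simp
  | monomial n a =>
      rw [Polynomial.aeval_monomial, Matrix.diagonal_pow, Algebra.algebraMap_eq_smul_one]
      ext i j
      by_cases h : i = j <;>
        simp [Matrix.diagonal_apply, h, Polynomial.eval_monomial]

lemma herm_comm_scalar {G : Type*} (U : G → Matrix H H ℂ)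
    (hirr : ∀ P : Matrix H H ℂ, P.IsHermitian → P * P = P →
      (∀ g, P * U g = U g * P) → P = 0 ∨ P = 1)
    (M : Matrix H H ℂ) (hM : M.IsHermitian)
    (hcomm : ∀ g, M * U g = U g * M) : ∃ c : ℂ, M = c • 1 := by
  rcases isEmpty_or_nonempty H with hE | hNE
  · exact ⟨0, by ext i j; exact isEmptyElim i⟩
  set W : Matrix H H ℂ := (hM.eigenvectorUnitary : Matrix H H ℂ) with hWdef
  have h1 : W * Wᴴ = 1 := by
    simpa [Matrix.star_eq_conjTranspose] using
      (Matrix.mem_unitaryGroup_iff.mp hM.eigenvectorUnitary.2)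
  have h2 : Wᴴ * W = 1 := by
    simpa [Matrix.star_eq_conjTranspose] using
      (Matrix.mem_unitaryGroup_iff'.mp hM.eigenvectorUnitary.2)
  set ev : H → ℂ := RCLike.ofReal ∘ hM.eigenvalues with hev
  have hspec : M = W * Matrix.diagonal ev * Wᴴ := by
    have := hM.spectral_theorem
    simp [Matrix.star_eq_conjTranspose] at this
    exact this
  obtain ⟨i₀⟩ := hNE
  set c : ℂ := ev i₀ with hc
  set p : ℂ[X] := ∏ μ ∈ (Finset.image ev Finset.univ).erase c,
    (Polynomial.C (c - μ)⁻¹ * (Polynomial.X - Polynomial.C μ)) with hp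
  set χ : H → ℂ := fun i => if ev i = c then 1 else 0 with hχ
  have heval : ∀ i, p.eval (ev i) = χ i := by
    intro i
    by_cases h : ev i = c
    · rw [hχ]; simp only [h, if_pos rfl]
      rw [hp, Polynomial.eval_prod]
      apply Finset.prod_eq_one
      intro μ hμ
      have hne : μ ≠ c := (Finset.mem_erase.mp hμ).1
      simp only [Polynomial.eval_mul, Polynomial.eval_C, Polynomial.eval_sub,
        Polynomial.eval_X, h]
      exact inv_mul_cancel₀ (sub_ne_zero.mpr (Ne.symm hne))
    · rw [hχ]; simp only [h, if_neg h]
      rw [hp, Polynomial.eval_prod]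
      apply Finset.prod_eq_zero (i := ev i)
      · exact Finset.mem_erase.mpr ⟨h, Finset.mem_image_of_mem _ (Finset.mem_univ i)⟩
      · simp
  set P : Matrix H H ℂ := W * Matrix.diagonal χ * Wᴴ with hP
  have hPaeval : Polynomial.aeval M p = P := by
    have he : (fun i => p.eval (ev i)) = χ := funext heval
    rw [hspec, aeval_conj' _ _ _ h1 h2, aeval_diag', he, hP]
  have hDstar : (Matrix.diagonal χ)ᴴ = Matrix.diagonal χ := by
    have hs : star χ = χ := by
      funext i; by_cases h : ev i = c <;> simp [hχ, h]
    rw [Matrix.diagonal_conjTranspose, hs]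
  have hPherm : P.IsHermitian := by
    unfold Matrix.IsHermitian
    rw [hP]
    simp only [Matrix.conjTranspose_mul, Matrix.conjTranspose_conjTranspose, hDstar,
      Matrix.mul_assoc]
  have hDsq : Matrix.diagonal χ ^ 2 = Matrix.diagonal χ := by
    have hs : χ ^ 2 = χ := by
      funext i; by_cases h : ev i = c <;> simp [hχ, h, pow_two]
    rw [Matrix.diagonal_pow, hs]
  have hPproj : P * P = P := by
    rw [hP, ← pow_two, conj_pow' _ _ h1 h2, hDsq]
  have hPcomm : ∀ g, P * U g = U g * P := by
    intro g
    rw [← hPaeval]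
    exact (aeval_comm' p (Commute.symm (hcomm g))).symm
  have hre : Wᴴ * P * W = Matrix.diagonal χ := by
    rw [hP]
    calc Wᴴ * (W * Matrix.diagonal χ * Wᴴ) * W
        = (Wᴴ * W) * (Matrix.diagonal χ * (Wᴴ * W)) := by simp only [Matrix.mul_assoc]
      _ = Matrix.diagonal χ := by rw [h2, Matrix.one_mul, Matrix.mul_one]
  have hPne : P ≠ 0 := by
    intro h0
    have hd : Matrix.diagonal χ = 0 := by
      rw [← hre, h0, Matrix.mul_zero, Matrix.zero_mul]
    have h1' := congrFun (congrFun hd i₀) i₀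
    rw [Matrix.diagonal_apply_eq] at h1'
    simp [hχ, hc] at h1'
  rcases hirr P hPherm hPproj hPcomm with h0 | hone
  · exact absurd h0 hPne
  have hDone : Matrix.diagonal χ = 1 := by
    rw [← hre, hone, Matrix.mul_one, h2]
  have hevc : ∀ i, ev i = c := by
    intro i
    by_contra h
    have := congrFun (congrFun hDone i) i
    rw [Matrix.diagonal_apply_eq, Matrix.one_apply_eq] at this
    simp [hχ, h] at this
  refine ⟨c, ?_⟩
  have : Matrix.diagonal ev = c • (1 : Matrix H H ℂ) := by
    ext i j
    by_cases h : i = j <;> simp [Matrix.diagonal_apply, Matrix.one_apply, h, hevc]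
  rw [hspec, this, Matrix.mul_smul, Matrix.smul_mul, Matrix.mul_one, h1]

lemma ptK_conj (A : Matrix (K × H) (K × H) ℂ) (Vg : Matrix K K ℂ) (B : Matrix H H ℂ)
    (hVg : Vgᴴ * Vg = 1) :
    ptK ((Vg ⊗ₖ B) * A * (Vg ⊗ₖ B)ᴴ) = B * ptK A * Bᴴ := by
  have hV : ∀ m n : K, ∑ k, Vg k m * star (Vg k n) = if m = n then 1 else 0 := by
    intro m n
    have := congrFun (congrFun hVg n) m
    simp only [Matrix.mul_apply, Matrix.conjTranspose_apply, Matrix.one_apply] at this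
    rw [show ((if m = n then 1 else 0 : ℂ)) = if n = m then 1 else 0 by
      by_cases h : m = n <;> simp [h, Ne.symm, eq_comm], ← this]
    exact Finset.sum_congr rfl fun k _ => mul_comm _ _
  ext i j
  simp only [ptK, Matrix.of_apply, Matrix.mul_apply, Matrix.conjTranspose_apply,
    Matrix.kroneckerMap_apply, Fintype.sum_prod_type, star_mul']
  simp only [Finset.sum_mul, Finset.mul_sum]
  rw [Finset.sum_comm]
  conv_lhs => enter [2, n]; rw [Finset.sum_comm]
  conv_lhs => enter [2, n, 2, b]; rw [Finset.sum_comm]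
  conv_lhs => enter [2, n, 2, b, 2, m]; rw [Finset.sum_comm]
  have key : ∀ (n : K) (b : H) (m : K) (y : H),
      (∑ x : K, Vg x m * B i y * A (m, y) (n, b) * (star (Vg x n) * star (B j b)))
        = (if m = n then 1 else 0) * (B i y * A (m, y) (n, b) * star (B j b)) := by
    intro n b m y
    rw [← hV m n, Finset.sum_mul]
    exact Finset.sum_congr rfl fun x _ => by ring
  simp only [key, ite_mul, one_mul, zero_mul, Finset.sum_ite_irrel, Finset.sum_const_zero,
    Finset.sum_ite_eq', Finset.mem_univ, if_true]
  rw [Finset.sum_comm]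
  conv_lhs => enter [2, b]; rw [Finset.sum_comm]

lemma choi_cov (Φ : Matrix H H ℂ →ₗ[ℂ] Matrix K K ℂ)
    (Ug : Matrix H H ℂ) (Vg : Matrix K K ℂ)
    (hUg : Ug * Ugᴴ = 1)
    (hcov : ∀ A, Φ (Ug * A * Ugᴴ) = Vg * Φ A * Vgᴴ) :
    (Vg ⊗ₖ (Ugᴴ)ᵀ) * choi Φ * (Vg ⊗ₖ (Ugᴴ)ᵀ)ᴴ = choi Φ := by
  have hUU : ∀ x z : H, ∑ a, Ug x a * star (Ug z a) = if x = z then 1 else 0 := by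
    intro x z
    have := congrFun (congrFun hUg x) z
    simp only [Matrix.mul_apply, Matrix.conjTranspose_apply, Matrix.one_apply] at this
    exact this
  have hmid : ∀ (a b x y : H),
      (Ug * Matrix.single a b (1:ℂ) * Ugᴴ) x y = Ug x a * star (Ug y b) := by
    intro a b x y
    simp only [Matrix.mul_apply, Matrix.single, Matrix.of_apply,
      Matrix.conjTranspose_apply, ite_mul, mul_ite, one_mul, mul_one, zero_mul, mul_zero]
    simp [ite_and, Finset.sum_ite_eq, ite_mul, zero_mul]
  have hE : ∀ i j : H, (∑ a : H, ∑ b : H,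
      (star (Ug i a) * Ug j b) • (Ug * Matrix.single a b (1:ℂ) * Ugᴴ))
        = Matrix.single i j 1 := by
    intro i j
    ext x y
    simp only [Matrix.sum_apply, Matrix.smul_apply, smul_eq_mul, hmid]
    have hre : ∀ a b : H, star (Ug i a) * Ug j b * (Ug x a * star (Ug y b))
        = (Ug x a * star (Ug i a)) * (Ug j b * star (Ug y b)) := fun a b => by ring
    simp only [hre]
    rw [← Finset.sum_mul_sum, hUU, hUU]
    by_cases h1 : i = x <;> by_cases h2 : j = y <;>
      simp [Matrix.single, h1, h2, @eq_comm _ x i]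
  ext p q
  obtain ⟨k, i⟩ := p
  obtain ⟨l, j⟩ := q
  have hrhs : choi Φ (k, i) (l, j)
      = ∑ a : H, ∑ b : H, (star (Ug i a) * Ug j b) *
          (Vg * Φ (Matrix.single a b 1) * Vgᴴ) k l := by
    calc choi Φ (k, i) (l, j) = Φ (Matrix.single i j 1) k l := rfl
      _ = Φ (∑ a : H, ∑ b : H, (star (Ug i a) * Ug j b) •
            (Ug * Matrix.single a b (1:ℂ) * Ugᴴ)) k l := by rw [hE i j]
      _ = ∑ a : H, ∑ b : H, (star (Ug i a) * Ug j b) *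
            Φ (Ug * Matrix.single a b 1 * Ugᴴ) k l := by
          simp only [map_sum, map_smul, Matrix.sum_apply, Matrix.smul_apply, smul_eq_mul]
      _ = _ := by simp only [hcov]
  rw [hrhs]
  simp only [choi, Matrix.mul_apply, Matrix.conjTranspose_apply, Matrix.kroneckerMap_apply,
    Matrix.of_apply, Fintype.sum_prod_type, Matrix.transpose_apply, star_mul', star_star,
    Finset.sum_mul, Finset.mul_sum]
  conv_lhs => enter [2, n, 2, b]; rw [Finset.sum_comm]
  conv_lhs => enter [2, n]; rw [Finset.sum_comm]
  rw [Finset.sum_comm]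
  conv_lhs => enter [2, a]; rw [Finset.sum_comm]
  refine Finset.sum_congr rfl fun a _ => Finset.sum_congr rfl fun b _ =>
    Finset.sum_congr rfl fun n _ => Finset.sum_congr rfl fun m _ => by ring

open scoped MatrixOrder in
lemma matAbs_eq_sqrt {e : Type*} [Fintype e] [DecidableEq e] (A : Matrix e e ℂ) :
    matAbs A = CFC.sqrt (Aᴴ * A) := by
  rw [CFC.sqrt_eq_real_sqrt _ (Matrix.posSemidef_conjTranspose_mul_self A).nonneg,
    cfcₙ_eq_cfc (hf := Real.continuous_sqrt.continuousOn) (hf0 := Real.sqrt_zero),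
    (Matrix.posSemidef_conjTranspose_mul_self A).1.cfc_eq, Matrix.IsHermitian.cfc,
    Unitary.conjStarAlgAut_apply]
  rfl

open scoped MatrixOrder in
lemma posSemidef_matAbs {e : Type*} [Fintype e] [DecidableEq e] (A : Matrix e e ℂ) :
    (matAbs A).PosSemidef := by
  rw [matAbs_eq_sqrt]; exact Matrix.nonneg_iff_posSemidef.mp (CFC.sqrt_nonneg _)

open scoped MatrixOrder in
lemma matAbs_conj {e : Type*} [Fintype e] [DecidableEq e] (A Wm : Matrix e e ℂ)
    (h1 : Wm * Wmᴴ = 1) (h2 : Wmᴴ * Wm = 1) :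
    matAbs (Wm * A * Wmᴴ) = Wm * matAbs A * Wmᴴ := by
  have conj_pow2 : ∀ D : Matrix e e ℂ, (Wm * D * Wmᴴ) ^ 2 = Wm * D ^ 2 * Wmᴴ := by
    intro D
    rw [pow_two, pow_two]
    calc Wm * D * Wmᴴ * (Wm * D * Wmᴴ) = Wm * (D * ((Wmᴴ * Wm) * (D * Wmᴴ))) := by
          simp only [Matrix.mul_assoc]
      _ = Wm * (D * D) * Wmᴴ := by rw [h2]; simp only [Matrix.one_mul, Matrix.mul_assoc]
  have key : (Wm * A * Wmᴴ)ᴴ * (Wm * A * Wmᴴ) = Wm * (Aᴴ * A) * Wmᴴ := by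
    calc (Wm * A * Wmᴴ)ᴴ * (Wm * A * Wmᴴ)
        = Wm * (Aᴴ * ((Wmᴴ * Wm) * (A * Wmᴴ))) := by
          simp only [Matrix.conjTranspose_mul, Matrix.conjTranspose_conjTranspose,
            Matrix.mul_assoc]
      _ = Wm * (Aᴴ * A) * Wmᴴ := by rw [h2]; simp only [Matrix.one_mul, Matrix.mul_assoc]
  have hpsd : (Wm * matAbs A * Wmᴴ).PosSemidef := by
    have := posSemidef_matAbs A
    exact (this.mul_mul_conjTranspose_same Wm)
  have hsq : (Wm * matAbs A * Wmᴴ) ^ 2 = (Wm * A * Wmᴴ)ᴴ * (Wm * A * Wmᴴ) := by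
    rw [key, conj_pow2]
    congr 1
    congr 1
    rw [matAbs_eq_sqrt]
    exact CFC.sq_sqrt (Aᴴ * A) (Matrix.posSemidef_conjTranspose_mul_self A).nonneg
  rw [matAbs_eq_sqrt (Wm * A * Wmᴴ)]
  exact CFC.sqrt_unique (by rw [← sq]; exact hsq) hpsd.nonneg

lemma ptK_isHermitian (A : Matrix (K × H) (K × H) ℂ) (hA : A.IsHermitian) :
    (ptK A).IsHermitian := by
  have h : ∀ p q, star (A q p) = A p q := by
    intro p q
    conv_rhs => rw [← hA]
    rfl
  unfold Matrix.IsHermitian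
  ext i j
  simp only [Matrix.conjTranspose_apply, ptK, Matrix.of_apply, star_sum]
  exact Finset.sum_congr rfl fun k _ => h (k, i) (k, j)

lemma ctT {m n : Type*} (A : Matrix m n ℂ) : Aᵀᴴ = Aᴴᵀ := by
  ext i j; rfl

lemma kron_conjTranspose {d' e : Type*} [Fintype d'] [Fintype e]
    (A : Matrix d' d' ℂ) (B : Matrix e e ℂ) : (A ⊗ₖ B)ᴴ = Aᴴ ⊗ₖ Bᴴ := by
  ext p q
  simp [Matrix.conjTranspose_apply, Matrix.kroneckerMap_apply, star_mul']

end aux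

theorem covariant_irreducible_MEI
    {G : Type*} [Group G]
    (U : G → Matrix H H ℂ) (V : G → Matrix K K ℂ)
    (hU : ∀ g, U g ∈ Matrix.unitaryGroup H ℂ)
    (hV : ∀ g, V g ∈ Matrix.unitaryGroup K ℂ)
    (hUhom : ∀ g h, U (g * h) = U g * U h)
    (hVhom : ∀ g h, V (g * h) = V g * V h)
    (hirr : ∀ P : Matrix H H ℂ, P.IsHermitian → P * P = P →
      (∀ g, P * U g = U g * P) → P = 0 ∨ P = 1)
    (Φ₁ Φ₂ : Matrix H H ℂ →ₗ[ℂ] Matrix K K ℂ)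
    (hCP₁ : (choi Φ₁).PosSemidef) (hCP₂ : (choi Φ₂).PosSemidef)
    (hTP₁ : ∀ A, (Φ₁ A).trace = A.trace) (hTP₂ : ∀ A, (Φ₂ A).trace = A.trace)
    (hcov₁ : ∀ g A, Φ₁ (U g * A * (U g)ᴴ) = V g * Φ₁ A * (V g)ᴴ)
    (hcov₂ : ∀ g A, Φ₂ (U g * A * (U g)ᴴ) = V g * Φ₂ A * (V g)ᴴ)
    (lam : ℝ) (hlam : 0 < lam ∧ lam < 1) :
    ∃ c : ℂ, ptK (matAbs ((lam : ℂ) • choi Φ₁ - ((1 : ℂ) - lam) • choi Φ₂)) =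
      c • (1 : Matrix H H ℂ) := by
  classical
  set Δ : Matrix (K × H) (K × H) ℂ := (lam : ℂ) • choi Φ₁ - ((1 : ℂ) - lam) • choi Φ₂ with hΔ
  have hU1 : ∀ g, U g * (U g)ᴴ = 1 := fun g => by
    simpa [Matrix.star_eq_conjTranspose] using (Matrix.mem_unitaryGroup_iff.mp (hU g))
  have hU2 : ∀ g, (U g)ᴴ * U g = 1 := fun g => by
    simpa [Matrix.star_eq_conjTranspose] using (Matrix.mem_unitaryGroup_iff'.mp (hU g))
  have hV1 : ∀ g, V g * (V g)ᴴ = 1 := fun g => by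
    simpa [Matrix.star_eq_conjTranspose] using (Matrix.mem_unitaryGroup_iff.mp (hV g))
  have hV2 : ∀ g, (V g)ᴴ * V g = 1 := fun g => by
    simpa [Matrix.star_eq_conjTranspose] using (Matrix.mem_unitaryGroup_iff'.mp (hV g))
  -- conjugate transposes and unitarity of the "bar" matrices
  have hBH : ∀ g, ((((U g)ᴴ)ᵀ))ᴴ = (U g)ᵀ := fun g => by
    rw [ctT, Matrix.conjTranspose_conjTranspose]
  have hB1 : ∀ g, (((U g)ᴴ)ᵀ) * ((((U g)ᴴ)ᵀ))ᴴ = 1 := fun g => by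
    rw [hBH, ← Matrix.transpose_mul, hU1 g, Matrix.transpose_one]
  have hB2 : ∀ g, ((((U g)ᴴ)ᵀ))ᴴ * (((U g)ᴴ)ᵀ) = 1 := fun g => by
    rw [hBH, ← Matrix.transpose_mul, hU2 g, Matrix.transpose_one]
  have hW1 : ∀ g, (V g ⊗ₖ ((U g)ᴴ)ᵀ) * (V g ⊗ₖ ((U g)ᴴ)ᵀ)ᴴ = 1 := fun g => by
    rw [kron_conjTranspose, ← Matrix.mul_kronecker_mul, hV1 g, hBH, ← Matrix.transpose_mul,
      hU1 g, Matrix.transpose_one, Matrix.one_kronecker_one]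
  have hW2 : ∀ g, (V g ⊗ₖ ((U g)ᴴ)ᵀ)ᴴ * (V g ⊗ₖ ((U g)ᴴ)ᵀ) = 1 := fun g => by
    rw [kron_conjTranspose, ← Matrix.mul_kronecker_mul, hV2 g, hBH, ← Matrix.transpose_mul,
      hU2 g, Matrix.transpose_one, Matrix.one_kronecker_one]
  -- invariance of Δ
  have hWD : ∀ g, (V g ⊗ₖ ((U g)ᴴ)ᵀ) * Δ * (V g ⊗ₖ ((U g)ᴴ)ᵀ)ᴴ = Δ := by
    intro g
    have h1 := choi_cov Φ₁ (U g) (V g) (hU1 g) (fun A => hcov₁ g A)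
    have h2 := choi_cov Φ₂ (U g) (V g) (hU1 g) (fun A => hcov₂ g A)
    rw [Matrix.mul_assoc] at h1 h2
    rw [hΔ]
    simp only [Matrix.mul_sub, Matrix.sub_mul, Matrix.mul_smul, Matrix.smul_mul,
      Matrix.mul_assoc, h1, h2]
  -- invariance of |Δ|
  have habs : ∀ g, (V g ⊗ₖ ((U g)ᴴ)ᵀ) * matAbs Δ * (V g ⊗ₖ ((U g)ᴴ)ᵀ)ᴴ = matAbs Δ := by
    intro g
    rw [← matAbs_conj Δ _ (hW1 g) (hW2 g), hWD g]
  -- invariance of the partial trace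
  set M : Matrix H H ℂ := ptK (matAbs Δ) with hMdef
  have hMinv : ∀ g, ((U g)ᴴ)ᵀ * M * (((U g)ᴴ)ᵀ)ᴴ = M := by
    intro g
    conv_rhs => rw [hMdef, ← habs g]
    exact (ptK_conj (matAbs Δ) (V g) (((U g)ᴴ)ᵀ) (hV2 g)).symm
  have hcommB : ∀ g, ((U g)ᴴ)ᵀ * M = M * ((U g)ᴴ)ᵀ := by
    intro g
    calc ((U g)ᴴ)ᵀ * M = ((U g)ᴴ)ᵀ * M * ((((U g)ᴴ)ᵀ)ᴴ * ((U g)ᴴ)ᵀ) := by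
          rw [hB2 g, Matrix.mul_one]
      _ = (((U g)ᴴ)ᵀ * M * (((U g)ᴴ)ᵀ)ᴴ) * ((U g)ᴴ)ᵀ := by simp only [Matrix.mul_assoc]
      _ = M * ((U g)ᴴ)ᵀ := by rw [hMinv g]
  -- Hermiticity
  have hAbsPsd : (matAbs Δ).PosSemidef :=
    posSemidef_matAbs Δ
  have hMherm : M.IsHermitian := ptK_isHermitian _ hAbsPsd.1
  -- the conjugated matrix
  set N : Matrix H H ℂ := (Mᴴ)ᵀ with hN
  have hNherm : N.IsHermitian := by
    unfold Matrix.IsHermitian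
    ext i j
    simp only [hN, Matrix.conjTranspose_apply, Matrix.transpose_apply, star_star]
    exact (hMherm.apply j i).symm
  have hNcomm : ∀ g, N * U g = U g * N := by
    intro g
    have h := congrArg (fun X => (Xᴴ)ᵀ) (hcommB g)
    simp only [Matrix.conjTranspose_mul, Matrix.transpose_mul, ctT,
      Matrix.conjTranspose_conjTranspose, Matrix.transpose_transpose] at h
    exact h.symm
  obtain ⟨c, hc⟩ := herm_comm_scalar U hirr N hNherm hNcomm
  refine ⟨starRingEnd ℂ c, ?_⟩
  have hMN : M = (Nᴴ)ᵀ := by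
    rw [hN]
    ext i j
    simp [Matrix.conjTranspose_apply, Matrix.transpose_apply, star_star]
  rw [hMN, hc]
  ext i j
  by_cases h : i = j
  · simp [Matrix.conjTranspose_apply, Matrix.transpose_apply, Matrix.one_apply, h]
  · simp only [Matrix.conjTranspose_apply, Matrix.transpose_apply, Matrix.smul_apply,
      Matrix.one_apply, h, if_false, smul_zero, star_zero, if_neg (fun hji : j = i => h hji.symm),
      smul_eq_mul, mul_zero]
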